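/- In the SCP dynamic-programming setting, suppose index j+1 exists and blk(j+1) = blk(j) + 1 (i.e., S_{j+1} is the first set of its block and a previous block exists). Then for every W ⊆ α: OPT(W, j+1, 0) = min( 2 + OPT(W \ S_{j+1}, j, flag(blk(j))), OPT(W, j, flag(blk(j))) ), where arithmetic is in ℕ ∪ {∞} with 2 + ∞ = ∞. -/

import Mathlib

/-- `OPT S blk flag W j b` in the SCP dynamic-programming setting: the infimum, over all
index sets `X ⊆ {i : i ≤ j}` covering `W` and meeting every block `β_x` (`x ≤ blk j`)
whose (updated) flag is `2`, of `2|X|` plus the number of blocks `β_x` (`x ≤ blk j`)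
with (updated) flag `1` that `X` misses; here the flag of block `blk j` is overridden
to be `b`.  The value is `∞` if no such `X` exists. -/
noncomputable def OPT {α : Type*} [DecidableEq α] {m q : ℕ}
    (S : Fin m → Finset α) (blk : Fin m → Fin q) (flag : Fin q → ℕ)
    (W : Finset α) (j : Fin m) (b : ℕ) : ℕ∞ :=
  sInf { n : ℕ∞ | ∃ X : Finset (Fin m),
    (∀ i ∈ X, i ≤ j) ∧
    (W ⊆ X.biUnion S) ∧
    (∀ x : Fin q, x ≤ blk j → Function.update flag (blk j) b x = 2 →
      ∃ i ∈ X, blk i = x) ∧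
    n = 2 * (X.card : ℕ∞) +
      ((Finset.univ.filter (fun x : Fin q =>
        x ≤ blk j ∧ Function.update flag (blk j) b x = 1 ∧
          ∀ i ∈ X, blk i ≠ x)).card : ℕ∞) }


/-- SCP recurrence when `S_{j+1}` is the first set of its block and a
previous block exists, for flag `b = 0`:
`OPT(W, j+1, 0) = min(2 + OPT(W \\ S_{j+1}, j, flag(blk j)), OPT(W, j, flag(blk j)))`. -/
theorem scp_recurrence_new_block_flag_zero
    {α : Type*} [DecidableEq α] {m q : ℕ} (hm : 0 < m) (hq : 0 < q)
    (S : Fin m → Finset α) (blk : Fin m → Fin q)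
    (hmono : Monotone blk) (hsurj : Function.Surjective blk)
    (flag : Fin q → ℕ) (hflag : ∀ x, flag x ≤ 2)
    (j j' : Fin m) (hj' : (j' : ℕ) = (j : ℕ) + 1)
    (hblk : (blk j' : ℕ) = (blk j : ℕ) + 1)
    (W : Finset α) :
    OPT S blk flag W j' 0 =
      min (2 + OPT S blk flag (W \ S j') j (flag (blk j)))
        (OPT S blk flag W j (flag (blk j))) := by
  classical
  have hup : Function.update flag (blk j) (flag (blk j)) = flag :=
    Function.update_eq_self _ _
  have hjlt : j < j' := by rw [Fin.lt_def]; omega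
  have hblt : blk j < blk j' := by rw [Fin.lt_def]; omega
  -- x ≤ blk j implies x ≠ blk j'
  have hxne : ∀ x : Fin q, x ≤ blk j → x ≠ blk j' := by
    intro x hx h
    rw [Fin.le_def] at hx
    rw [h] at hx
    omega
  have hupd0 : ∀ x : Fin q, x ≤ blk j →
      Function.update flag (blk j') 0 x = flag x := by
    intro x hx
    exact Function.update_of_ne (hxne x hx) _ _
  have hle' : ∀ x : Fin q, x ≤ blk j' → x ≠ blk j' → x ≤ blk j := by
    intro x h1 h2
    rw [Fin.le_def] at *
    have : (x : ℕ) ≠ (blk j' : ℕ) := fun h => h2 (Fin.ext h)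
    omega
  -- the filter identity, version with inserted j'
  have E1 : ∀ X : Finset (Fin m),
      (Finset.univ.filter (fun x : Fin q =>
        x ≤ blk j' ∧ Function.update flag (blk j') 0 x = 1 ∧
          ∀ i ∈ insert j' X, blk i ≠ x)) =
      (Finset.univ.filter (fun x : Fin q =>
        x ≤ blk j ∧ Function.update flag (blk j) (flag (blk j)) x = 1 ∧
          ∀ i ∈ X, blk i ≠ x)) := by
    intro X
    apply Finset.filter_congr
    intro x _
    rw [hup]
    constructor
    · rintro ⟨h1, h2, h3⟩
      by_cases hx : x = blk j'
      · rw [hx, Function.update_self] at h2; omega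
      · have hxj := hle' x h1 hx
        rw [hupd0 x hxj] at h2
        exact ⟨hxj, h2, fun i hi => h3 i (Finset.mem_insert_of_mem hi)⟩
    · rintro ⟨h1, h2, h3⟩
      refine ⟨h1.trans hblt.le, ?_, ?_⟩
      · rw [hupd0 x h1]; exact h2
      · intro i hi
        rcases Finset.mem_insert.mp hi with h | h
        · rw [h]; exact fun hc => hxne x h1 hc.symm
        · exact h3 i h
  -- the filter identity, version without j'
  have E2 : ∀ X : Finset (Fin m),
      (Finset.univ.filter (fun x : Fin q =>
        x ≤ blk j' ∧ Function.update flag (blk j') 0 x = 1 ∧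
          ∀ i ∈ X, blk i ≠ x)) =
      (Finset.univ.filter (fun x : Fin q =>
        x ≤ blk j ∧ Function.update flag (blk j) (flag (blk j)) x = 1 ∧
          ∀ i ∈ X, blk i ≠ x)) := by
    intro X
    apply Finset.filter_congr
    intro x _
    rw [hup]
    constructor
    · rintro ⟨h1, h2, h3⟩
      by_cases hx : x = blk j'
      · rw [hx, Function.update_self] at h2; omega
      · have hxj := hle' x h1 hx
        rw [hupd0 x hxj] at h2
        exact ⟨hxj, h2, h3⟩
    · rintro ⟨h1, h2, h3⟩
      refine ⟨h1.trans hblt.le, ?_, h3⟩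
      rw [hupd0 x h1]; exact h2
  apply le_antisymm
  · apply le_min
    · -- LHS ≤ 2 + OPT (W \ S j') j
      rcases Set.eq_empty_or_nonempty
        { n : ℕ∞ | ∃ X : Finset (Fin m),
          (∀ i ∈ X, i ≤ j) ∧
          ((W \ S j') ⊆ X.biUnion S) ∧
          (∀ x : Fin q, x ≤ blk j →
            Function.update flag (blk j) (flag (blk j)) x = 2 → ∃ i ∈ X, blk i = x) ∧
          n = 2 * (X.card : ℕ∞) +
            ((Finset.univ.filter (fun x : Fin q =>
              x ≤ blk j ∧ Function.update flag (blk j) (flag (blk j)) x = 1 ∧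
                ∀ i ∈ X, blk i ≠ x)).card : ℕ∞) } with hA | hA
      · have hO : OPT S blk flag (W \ S j') j (flag (blk j)) = ⊤ := by
          rw [OPT, hA, sInf_empty]
        rw [hO]
        simp
      · have hmem := csInf_mem hA
        obtain ⟨X, hX1, hX2, hX3, hX4⟩ := hmem
        have hj'X : j' ∉ X := fun h => absurd (hX1 j' h) (not_le.mpr hjlt)
        rw [OPT]
        refine le_trans (sInf_le ⟨insert j' X, ?_, ?_, ?_, rfl⟩) ?_
        · intro i hi
          rcases Finset.mem_insert.mp hi with h | h
          · exact h ▸ le_refl _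
          · exact (hX1 i h).trans hjlt.le
        · intro w hw
          by_cases hws : w ∈ S j'
          · exact Finset.mem_biUnion.mpr ⟨j', Finset.mem_insert_self _ _, hws⟩
          · have := hX2 (Finset.mem_sdiff.mpr ⟨hw, hws⟩)
            obtain ⟨i, hi, hwi⟩ := Finset.mem_biUnion.mp this
            exact Finset.mem_biUnion.mpr ⟨i, Finset.mem_insert_of_mem hi, hwi⟩
        · intro x hx1 hx2
          by_cases hx : x = blk j'
          · rw [hx, Function.update_self] at hx2; omega
          · have hxj := hle' x hx1 hx
            rw [hupd0 x hxj] at hx2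
            rw [← hup] at hx2
            obtain ⟨i, hi, hbi⟩ := hX3 x hxj hx2
            exact ⟨i, Finset.mem_insert_of_mem hi, hbi⟩
        · rw [E1 X, Finset.card_insert_of_notMem hj'X]
          have hO : OPT S blk flag (W \ S j') j (flag (blk j)) =
              2 * (X.card : ℕ∞) +
              ((Finset.univ.filter (fun x : Fin q =>
                x ≤ blk j ∧ Function.update flag (blk j) (flag (blk j)) x = 1 ∧
                  ∀ i ∈ X, blk i ≠ x)).card : ℕ∞) := hX4
          rw [hO]
          apply le_of_eq
          push_cast
          ring
    · -- LHS ≤ OPT W j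
      rcases Set.eq_empty_or_nonempty
        { n : ℕ∞ | ∃ X : Finset (Fin m),
          (∀ i ∈ X, i ≤ j) ∧
          (W ⊆ X.biUnion S) ∧
          (∀ x : Fin q, x ≤ blk j →
            Function.update flag (blk j) (flag (blk j)) x = 2 → ∃ i ∈ X, blk i = x) ∧
          n = 2 * (X.card : ℕ∞) +
            ((Finset.univ.filter (fun x : Fin q =>
              x ≤ blk j ∧ Function.update flag (blk j) (flag (blk j)) x = 1 ∧
                ∀ i ∈ X, blk i ≠ x)).card : ℕ∞) } with hB | hB
      · have hO : OPT S blk flag W j (flag (blk j)) = ⊤ := by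
          rw [OPT, hB, sInf_empty]
        rw [hO]
        exact le_top
      · have hmem := csInf_mem hB
        obtain ⟨X, hX1, hX2, hX3, hX4⟩ := hmem
        rw [OPT]
        refine le_trans (sInf_le ⟨X, ?_, hX2, ?_, rfl⟩) ?_
        · intro i hi; exact (hX1 i hi).trans hjlt.le
        · intro x hx1 hx2
          by_cases hx : x = blk j'
          · rw [hx, Function.update_self] at hx2; omega
          · have hxj := hle' x hx1 hx
            rw [hupd0 x hxj, ← hup] at hx2
            exact hX3 x hxj hx2
        · rw [E2 X]
          exact le_of_eq hX4.symm
  · -- min ≤ LHS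
    rw [OPT]
    apply le_sInf
    rintro a ⟨X, hX1, hX2, hX3, rfl⟩
    by_cases hj'X : j' ∈ X
    · -- use left branch
      set X' := X.erase j' with hX'def
      have hins : insert j' X' = X := Finset.insert_erase hj'X
      have hj'X' : j' ∉ X' := Finset.notMem_erase _ _
      have hX'le : ∀ i ∈ X', i ≤ j := by
        intro i hi
        have h1 := hX1 i (Finset.erase_subset _ _ hi)
        have h2 : i ≠ j' := Finset.ne_of_mem_erase hi
        rw [Fin.le_def] at *
        have : (i : ℕ) ≠ (j' : ℕ) := fun h => h2 (Fin.ext h)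
        omega
      refine le_trans (min_le_left _ _) ?_
      have hmemA : 2 * (X'.card : ℕ∞) +
          ((Finset.univ.filter (fun x : Fin q =>
            x ≤ blk j ∧ Function.update flag (blk j) (flag (blk j)) x = 1 ∧
              ∀ i ∈ X', blk i ≠ x)).card : ℕ∞) ∈
          { n : ℕ∞ | ∃ X : Finset (Fin m),
            (∀ i ∈ X, i ≤ j) ∧
            ((W \ S j') ⊆ X.biUnion S) ∧
            (∀ x : Fin q, x ≤ blk j →
              Function.update flag (blk j) (flag (blk j)) x = 2 → ∃ i ∈ X, blk i = x) ∧
            n = 2 * (X.card : ℕ∞) +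
              ((Finset.univ.filter (fun x : Fin q =>
                x ≤ blk j ∧ Function.update flag (blk j) (flag (blk j)) x = 1 ∧
                  ∀ i ∈ X, blk i ≠ x)).card : ℕ∞) } := by
        refine ⟨X', hX'le, ?_, ?_, rfl⟩
        · intro w hw
          obtain ⟨hw1, hw2⟩ := Finset.mem_sdiff.mp hw
          obtain ⟨i, hi, hwi⟩ := Finset.mem_biUnion.mp (hX2 hw1)
          have : i ≠ j' := fun h => hw2 (h ▸ hwi)
          exact Finset.mem_biUnion.mpr ⟨i, Finset.mem_erase.mpr ⟨this, hi⟩, hwi⟩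
        · intro x hx1 hx2
          rw [hup] at hx2
          have hx1' : x ≤ blk j' := hx1.trans hblt.le
          have : Function.update flag (blk j') 0 x = 2 := by
            rw [hupd0 x hx1]; exact hx2
          obtain ⟨i, hi, hbi⟩ := hX3 x hx1' this
          have hine : i ≠ j' := by
            intro h
            rw [h] at hbi
            exact hxne x hx1 hbi.symm
          exact ⟨i, Finset.mem_erase.mpr ⟨hine, hi⟩, hbi⟩
      have hsle := sInf_le hmemA
      calc 2 + OPT S blk flag (W \ S j') j (flag (blk j))
          ≤ 2 + (2 * (X'.card : ℕ∞) +
            ((Finset.univ.filter (fun x : Fin q =>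
              x ≤ blk j ∧ Function.update flag (blk j) (flag (blk j)) x = 1 ∧
                ∀ i ∈ X', blk i ≠ x)).card : ℕ∞)) := by
            rw [OPT]; exact add_le_add_right hsle 2
        _ = 2 * (X.card : ℕ∞) +
            ((Finset.univ.filter (fun x : Fin q =>
              x ≤ blk j' ∧ Function.update flag (blk j') 0 x = 1 ∧
                ∀ i ∈ X, blk i ≠ x)).card : ℕ∞) := by
            rw [← hins, E1 X', Finset.card_insert_of_notMem hj'X']
            push_cast
            ring
    · -- use right branch
      have hXle : ∀ i ∈ X, i ≤ j := by
        intro i hi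
        have h1 := hX1 i hi
        have h2 : i ≠ j' := fun h => hj'X (h ▸ hi)
        rw [Fin.le_def] at *
        have : (i : ℕ) ≠ (j' : ℕ) := fun h => h2 (Fin.ext h)
        omega
      refine le_trans (min_le_right _ _) ?_
      rw [OPT]
      refine le_trans (sInf_le ⟨X, hXle, hX2, ?_, rfl⟩) ?_
      · intro x hx1 hx2
        rw [hup] at hx2
        have : Function.update flag (blk j') 0 x = 2 := by
          rw [hupd0 x hx1]; exact hx2
        exact hX3 x (hx1.trans hblt.le) this
      · rw [E2 X]
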